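/- Let φ : E(H) → E(H) be an order-preserving (in both directions) bijection, and suppose there exist states D, D' with tr(φ(E)D') = tr(E D) for all effects E. If P is a rank-one projection with tr(PD) ≠ 0 and λ ∈ [0,1], then φ(λP) = λ φ(P). -/

import Mathlib

open scoped InnerProductSpace

open ContinuousLinearMap RCLike

/-- An effect: a positive operator majorized by the identity (Loewner order). -/
def IsEffect {H : Type} [NormedAddCommGroup H] [InnerProductSpace ℂ H] [CompleteSpace H]
    (E : H →L[ℂ] H) : Prop := 0 ≤ E ∧ E ≤ 1

/-- A rank-one (orthogonal) projection. -/
def IsRankOneProjection {H : Type} [NormedAddCommGroup H] [InnerProductSpace ℂ H]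
    [CompleteSpace H] (P : H →L[ℂ] H) : Prop :=
  IsIdempotentElem P ∧ IsSelfAdjoint P ∧ Module.finrank ℂ (LinearMap.range P.toLinearMap) = 1

/-- The trace of an operator computed along a Hilbert basis. -/
noncomputable def traceAlong {H : Type} [NormedAddCommGroup H] [InnerProductSpace ℂ H]
    [CompleteSpace H] {ι : Type} (b : HilbertBasis ι ℂ H) (T : H →L[ℂ] H) : ℂ :=
  ∑' i, ⟪T (b i), b i⟫_ℂ

/-- A state: a positive (trace-class) operator of trace one. -/
def IsState {H : Type} [NormedAddCommGroup H] [InnerProductSpace ℂ H] [CompleteSpace H]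
    {ι : Type} (b : HilbertBasis ι ℂ H) (D : H →L[ℂ] H) : Prop :=
  0 ≤ D ∧ HasSum (fun i => ⟪D (b i), b i⟫_ℂ) 1


section Helpers

variable {H : Type} [NormedAddCommGroup H] [InnerProductSpace ℂ H] [CompleteSpace H]

variable {H : Type} [NormedAddCommGroup H] [InnerProductSpace ℂ H] [CompleteSpace H]

/-- rank one operator `x ↦ ⟪w, x⟫ • w`. -/
noncomputable def rk (w : H) : H →L[ℂ] H := (innerSL ℂ w).smulRight w

lemma rk_apply (w x : H) : rk w x = ⟪w, x⟫_ℂ • w := rfl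

lemma rk_symm (w : H) (x y : H) : ⟪rk w x, y⟫_ℂ = ⟪x, rk w y⟫_ℂ := by
  simp [rk_apply, inner_smul_left, inner_smul_right, inner_conj_symm]

lemma smul_rk_isPositive (w : H) (r : ℝ) (hr : 0 ≤ r) :
    ((r : ℂ) • rk w).IsPositive := by
  constructor
  · intro x y
    simp only [ContinuousLinearMap.smul_apply, ContinuousLinearMap.coe_coe]
    rw [inner_smul_left, inner_smul_right, Complex.conj_ofReal, rk_symm]
  · intro x
    rw [reApplyInnerSelf_apply]
    simp only [ContinuousLinearMap.smul_apply]
    rw [inner_smul_left, rk_apply, inner_smul_left]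
    rw [Complex.conj_ofReal]
    have : (starRingEnd ℂ) ⟪w, x⟫_ℂ * ⟪w, x⟫_ℂ = (‖⟪w, x⟫_ℂ‖ ^ 2 : ℝ) := by
      rw [RCLike.conj_mul]; norm_cast
    rw [this]
    have : ((r:ℂ) * ((‖⟪w, x⟫_ℂ‖ ^ 2 : ℝ) : ℂ)) = ((r * ‖⟪w, x⟫_ℂ‖ ^ 2 : ℝ) : ℂ) := by
      push_cast; ring
    rw [this]
    exact le_of_le_of_eq (mul_nonneg hr (sq_nonneg _)) (RCLike.ofReal_re _).symm

/-- Cauchy-Schwarz for a positive operator. -/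
lemma pos_cs {T : H →L[ℂ] H} (hT : T.IsPositive) (x v : H) :
    ‖⟪x, T v⟫_ℂ‖ ^ 2 ≤ re ⟪x, T x⟫_ℂ * re ⟪v, T v⟫_ℂ := by
  have hsym0 := hT.1
  have hsym : ∀ a c : H, ⟪T a, c⟫_ℂ = ⟪a, T c⟫_ℂ := fun a c => hsym0 a c
  let c : PreInnerProductSpace.Core ℂ H :=
    { inner := fun a b => ⟪a, T b⟫_ℂ
      conj_inner_symm := fun a b => by
        change (starRingEnd ℂ) ⟪b, T a⟫_ℂ = ⟪a, T b⟫_ℂ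
        rw [inner_conj_symm]
        exact hsym a b
      re_inner_nonneg := fun a => hT.re_inner_nonneg_right a
      add_left := fun a b c => inner_add_left _ _ _
      smul_left := fun a b r => inner_smul_left _ _ _ }
  have := @InnerProductSpace.Core.inner_mul_inner_self_le ℂ H _ _ _ c x v
  have hnorm : ‖⟪v, T x⟫_ℂ‖ = ‖⟪x, T v⟫_ℂ‖ := by
    have : ⟪v, T x⟫_ℂ = (starRingEnd ℂ) ⟪x, T v⟫_ℂ := by
      rw [← hsym x v, inner_conj_symm]
    rw [this, RCLike.norm_conj]
  calc ‖⟪x, T v⟫_ℂ‖ ^ 2 = ‖⟪x, T v⟫_ℂ‖ * ‖⟪v, T x⟫_ℂ‖ := by rw [hnorm]; ring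
    _ ≤ re ⟪x, T x⟫_ℂ * re ⟪v, T v⟫_ℂ := this

lemma pos_apply_eq_zero {T : H →L[ℂ] H} (hT : T.IsPositive) {v : H}
    (hv : re ⟪v, T v⟫_ℂ = 0) : T v = 0 := by
  have h := pos_cs hT (T v) v
  rw [hv, mul_zero] at h
  have h0 : ‖⟪T v, T v⟫_ℂ‖ = 0 := by
    nlinarith [norm_nonneg ⟪T v, T v⟫_ℂ]
  rw [norm_eq_zero] at h0
  exact inner_self_eq_zero.mp h0


/-- If `z` is orthogonal to everything orthogonal to `a`, then `z ∈ span {a}`. -/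
lemma mem_span_of_orthogonal (a z : H) (h : ∀ y, ⟪a, y⟫_ℂ = 0 → ⟪y, z⟫_ℂ = 0) :
    z ∈ Submodule.span ℂ {a} := by
  set K := Submodule.span ℂ {a} with hK
  haveI : FiniteDimensional ℂ K := by
    rw [hK]; infer_instance
  rw [← Submodule.orthogonal_orthogonal K]
  intro y hy
  rw [Submodule.mem_orthogonal] at hy
  exact h y (hy a (Submodule.mem_span_singleton_self a))

/-- A symmetric operator with range inside the line spanned by a unit vector `w`
is a real multiple of `rk w`. -/
lemma eq_smul_rk {w : H} (hw : ‖w‖ = 1) (T : H →L[ℂ] H)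
    (hsym : ∀ x y, ⟪T x, y⟫_ℂ = ⟪x, T y⟫_ℂ)
    (hr : ∀ x, ∃ c : ℂ, T x = c • w) :
    T = ⟪w, T w⟫_ℂ • rk w := by
  have hww : ⟪w, w⟫_ℂ = 1 := by
    rw [inner_self_eq_norm_sq_to_K, hw]; norm_num
  obtain ⟨d, hd⟩ := hr w
  have hdval : ⟪w, T w⟫_ℂ = d := by rw [hd, inner_smul_right, hww, mul_one]
  have hdreal : (starRingEnd ℂ) d = d := by
    rw [← hdval]
    calc (starRingEnd ℂ) ⟪w, T w⟫_ℂ = ⟪T w, w⟫_ℂ := inner_conj_symm _ _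
      _ = ⟪w, T w⟫_ℂ := hsym w w
  ext x
  obtain ⟨c, hc⟩ := hr x
  have hcval : c = ⟪w, T x⟫_ℂ := by rw [hc, inner_smul_right, hww, mul_one]
  have h2 : ⟪w, T x⟫_ℂ = ⟪T w, x⟫_ℂ := (hsym w x).symm
  have h3 : ⟪T w, x⟫_ℂ = d * ⟪w, x⟫_ℂ := by
    rw [hd, inner_smul_left, hdreal]
  rw [ContinuousLinearMap.smul_apply, rk_apply, hc, hcval, h2, h3, hdval, smul_smul]

/-- Structure of positive operators below an operator vanishing on `{w}ᗮ`. -/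
lemma below_structure {w : H} (hw : ‖w‖ = 1) {F Q : H →L[ℂ] H}
    (hF : (0:H →L[ℂ] H) ≤ F) (hFQ : F ≤ Q)
    (hker : ∀ x, ⟪w, x⟫_ℂ = 0 → Q x = 0) :
    F = ⟪w, F w⟫_ℂ • rk w := by
  have hFpos : F.IsPositive := (ContinuousLinearMap.nonneg_iff_isPositive F).mp hF
  have hsym0 := hFpos.1
  have hsym : ∀ a c : H, ⟪F a, c⟫_ℂ = ⟪a, F c⟫_ℂ := fun a c => hsym0 a c
  have hdiff : (Q - F).IsPositive := hFQ
  have hFker : ∀ x, ⟪w, x⟫_ℂ = 0 → F x = 0 := by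
    intro x hx
    have h1 : 0 ≤ re ⟪x, F x⟫_ℂ := hFpos.re_inner_nonneg_right x
    have h2 : re ⟪(Q - F) x, x⟫_ℂ ≥ 0 := hdiff.re_inner_nonneg_left x
    have h3 : re ⟪x, F x⟫_ℂ = 0 := by
      have hQx := hker x hx
      rw [ContinuousLinearMap.sub_apply, hQx, zero_sub, inner_neg_left, map_neg] at h2
      have h4 : re ⟪F x, x⟫_ℂ ≤ 0 := by linarith
      rw [← inner_re_symm]
      exact le_antisymm h4 (hFpos.re_inner_nonneg_left x)
    exact pos_apply_eq_zero hFpos h3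
  have hFw : ∃ d : ℂ, F w = d • w := by
    have hmem : F w ∈ Submodule.span ℂ {w} := by
      apply mem_span_of_orthogonal
      intro y hy
      rw [← hsym y w, hFker y hy, inner_zero_left]
    obtain ⟨d, hd⟩ := Submodule.mem_span_singleton.mp hmem
    exact ⟨d, hd.symm⟩
  obtain ⟨d, hd⟩ := hFw
  apply eq_smul_rk hw F hsym
  intro x
  have hww : ⟪w, w⟫_ℂ = 1 := by
    rw [inner_self_eq_norm_sq_to_K, hw]; norm_num
  have hdecomp : x = ⟪w, x⟫_ℂ • w + (x - ⟪w, x⟫_ℂ • w) := by abel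
  have hperp : ⟪w, x - ⟪w, x⟫_ℂ • w⟫_ℂ = 0 := by
    rw [inner_sub_right, inner_smul_right, hww, mul_one, sub_self]
  refine ⟨⟪w, x⟫_ℂ * d, ?_⟩
  conv_lhs => rw [hdecomp]
  rw [map_add, map_smul, hFker _ hperp, add_zero, hd, smul_smul]

/-- traceAlong is conjugate-homogeneous. -/
lemma traceAlong_smul_mul {ι : Type} (b : HilbertBasis ι ℂ H) (c : ℂ) (A D : H →L[ℂ] H) :
    traceAlong b ((c • A) * D) = (starRingEnd ℂ) c * traceAlong b (A * D) := by
  have h1 : (c • A) * D = c • (A * D) := smul_mul_assoc c A D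
  rw [h1, traceAlong, traceAlong]
  have h2 : ∀ i : ι, ⟪(c • (A * D)) (b i), b i⟫_ℂ
      = (starRingEnd ℂ) c * ⟪(A * D) (b i), b i⟫_ℂ := by
    intro i
    rw [ContinuousLinearMap.smul_apply, inner_smul_left]
  simp_rw [h2]
  exact tsum_mul_left


lemma re_inner_smul_rk (w x : H) (t : ℝ) :
    re ⟪((t:ℂ) • rk w) x, x⟫_ℂ = t * ‖⟪w, x⟫_ℂ‖ ^ 2 := by
  rw [ContinuousLinearMap.smul_apply, inner_smul_left, rk_apply, inner_smul_left,
    Complex.conj_ofReal]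
  have h1 : (starRingEnd ℂ) ⟪w, x⟫_ℂ * ⟪w, x⟫_ℂ = ((‖⟪w, x⟫_ℂ‖ ^ 2 : ℝ) : ℂ) := by
    rw [RCLike.conj_mul]; norm_cast
  rw [h1]
  have h2 : ((t:ℂ) * ((‖⟪w, x⟫_ℂ‖ ^ 2 : ℝ) : ℂ)) = ((t * ‖⟪w, x⟫_ℂ‖ ^ 2 : ℝ) : ℂ) := by
    push_cast; ring
  rw [h2]; exact RCLike.ofReal_re _

lemma chain_rank_one (Q : H →L[ℂ] H) (hQpos : Q.IsPositive) (hQ1 : Q ≤ 1) (hQne : Q ≠ 0)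
    (hchain : ∀ F₁ F₂ : H →L[ℂ] H, IsEffect F₁ → F₁ ≤ Q → IsEffect F₂ → F₂ ≤ Q →
      F₁ ≤ F₂ ∨ F₂ ≤ F₁) :
    ∃ w : H, ‖w‖ = 1 ∧ Q = ⟪w, Q w⟫_ℂ • rk w := by
  have hsym0 := hQpos.1
  have hsym : ∀ a c : H, ⟪Q a, c⟫_ℂ = ⟪a, Q c⟫_ℂ := fun a c => hsym0 a c
  -- a vector not killed by Q
  have hex : ∃ w₀, Q w₀ ≠ 0 := by
    by_contra h
    push_neg at h
    exact hQne (ContinuousLinearMap.ext fun x => by rw [h x]; rfl)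
  obtain ⟨w₀, hw₀⟩ := hex
  have hr_pos : ∀ v, Q v ≠ 0 → 0 < re ⟪v, Q v⟫_ℂ := by
    intro v hv
    rcases lt_or_eq_of_le (hQpos.re_inner_nonneg_right v) with h | h
    · exact h
    · exact absurd (pos_apply_eq_zero hQpos h.symm) hv
  set A : H → (H →L[ℂ] H) := fun v => (((re ⟪v, Q v⟫_ℂ)⁻¹ : ℝ) : ℂ) • rk (Q v) with hA
  have hCS : ∀ v x, ‖⟪Q v, x⟫_ℂ‖ ^ 2 ≤ re ⟪v, Q v⟫_ℂ * re ⟪Q x, x⟫_ℂ := by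
    intro v x
    have h := pos_cs hQpos x v
    have h1 : ‖⟪Q v, x⟫_ℂ‖ = ‖⟪x, Q v⟫_ℂ‖ := norm_inner_symm _ _
    have h2 : re ⟪x, Q x⟫_ℂ = re ⟪Q x, x⟫_ℂ := inner_re_symm _ _
    rw [h1]
    calc ‖⟪x, Q v⟫_ℂ‖ ^ 2 ≤ re ⟪x, Q x⟫_ℂ * re ⟪v, Q v⟫_ℂ := h
      _ = re ⟪v, Q v⟫_ℂ * re ⟪Q x, x⟫_ℂ := by rw [h2]; ring
  have hApos : ∀ v, Q v ≠ 0 → (A v).IsPositive := by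
    intro v hv
    exact smul_rk_isPositive (Q v) _ (inv_nonneg.mpr (hr_pos v hv).le)
  have hAle : ∀ v, Q v ≠ 0 → A v ≤ Q := by
    intro v hv
    have hrv := hr_pos v hv
    show (Q - A v).IsPositive
    constructor
    · exact hQpos.1.sub (hApos v hv).1
    · intro x
      rw [reApplyInnerSelf_apply, ContinuousLinearMap.sub_apply, inner_sub_left, map_sub]
      have h1 : re ⟪A v x, x⟫_ℂ = (re ⟪v, Q v⟫_ℂ)⁻¹ * ‖⟪Q v, x⟫_ℂ‖ ^ 2 :=
        re_inner_smul_rk (Q v) x _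
      have h2 := hCS v x
      have h3 : (re ⟪v, Q v⟫_ℂ)⁻¹ * ‖⟪Q v, x⟫_ℂ‖ ^ 2 ≤ re ⟪Q x, x⟫_ℂ := by
        rw [inv_mul_le_iff₀ hrv]
        exact h2
      rw [h1]
      linarith
  have hAeff : ∀ v, Q v ≠ 0 → IsEffect (A v) := by
    intro v hv
    exact ⟨(ContinuousLinearMap.nonneg_iff_isPositive (A v)).mpr (hApos v hv),
      le_trans (hAle v hv) hQ1⟩
  -- domination gives span membership
  have hdom : ∀ u v, Q u ≠ 0 → Q v ≠ 0 → A u ≤ A v → Q u ∈ Submodule.span ℂ {Q v} := by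
    intro u v hu hv hle
    apply mem_span_of_orthogonal
    intro y hy
    have h1 : 0 ≤ re ⟪(A v - A u) y, y⟫_ℂ := (hle : (A v - A u).IsPositive).re_inner_nonneg_left y
    rw [ContinuousLinearMap.sub_apply, inner_sub_left, map_sub] at h1
    have h2 : re ⟪A v y, y⟫_ℂ = (re ⟪v, Q v⟫_ℂ)⁻¹ * ‖⟪Q v, y⟫_ℂ‖ ^ 2 :=
      re_inner_smul_rk (Q v) y _
    have h3 : re ⟪A u y, y⟫_ℂ = (re ⟪u, Q u⟫_ℂ)⁻¹ * ‖⟪Q u, y⟫_ℂ‖ ^ 2 :=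
      re_inner_smul_rk (Q u) y _
    rw [h2, h3, hy, norm_zero] at h1
    have h4 : (re ⟪u, Q u⟫_ℂ)⁻¹ * ‖⟪Q u, y⟫_ℂ‖ ^ 2 ≤ 0 := by
      simpa using h1
    have h5 : 0 < (re ⟪u, Q u⟫_ℂ)⁻¹ := inv_pos.mpr (hr_pos u hu)
    have h6 : ‖⟪Q u, y⟫_ℂ‖ ^ 2 = 0 := by nlinarith [sq_nonneg ‖⟪Q u, y⟫_ℂ‖]
    have h7 : ⟪Q u, y⟫_ℂ = 0 := by
      rw [pow_eq_zero_iff (two_ne_zero)] at h6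
      exact norm_eq_zero.mp h6
    rw [← inner_conj_symm, h7, map_zero]
  -- every Q x lies on the line through Q w₀
  have hline : ∀ x, Q x ∈ Submodule.span ℂ {Q w₀} := by
    intro x
    by_contra hx
    have hQx : Q x ≠ 0 := fun h => hx (h ▸ Submodule.zero_mem _)
    rcases hchain (A w₀) (A x) (hAeff w₀ hw₀) (hAle w₀ hw₀) (hAeff x hQx) (hAle x hQx)
      with hle | hle
    · have hmem := hdom w₀ x hw₀ hQx hle
      obtain ⟨c, hc⟩ := Submodule.mem_span_singleton.mp hmem
      have hcne : c ≠ 0 := by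
        intro h
        rw [h, zero_smul] at hc
        exact hw₀ hc.symm
      apply hx
      rw [Submodule.mem_span_singleton]
      exact ⟨c⁻¹, by rw [← hc, smul_smul, inv_mul_cancel₀ hcne, one_smul]⟩
    · exact hx (hdom x w₀ hQx hw₀ hle)
  -- normalize
  have hnorm : ‖Q w₀‖ ≠ 0 := norm_ne_zero_iff.mpr hw₀
  set w : H := ((‖Q w₀‖⁻¹ : ℝ) : ℂ) • Q w₀ with hwdef
  have hw1 : ‖w‖ = 1 := by
    rw [hwdef, norm_smul]
    simp [hnorm]
  have hwQ : Q w₀ = ((‖Q w₀‖ : ℝ) : ℂ) • w := by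
    rw [hwdef, smul_smul]
    have h9 : ((‖Q w₀‖ : ℝ) : ℂ) * ((‖Q w₀‖⁻¹ : ℝ) : ℂ) = 1 := by
      norm_cast
      exact mul_inv_cancel₀ hnorm
    rw [h9, one_smul]
  refine ⟨w, hw1, eq_smul_rk hw1 Q hsym ?_⟩
  intro x
  obtain ⟨c, hc⟩ := Submodule.mem_span_singleton.mp (hline x)
  refine ⟨c * ((‖Q w₀‖ : ℝ) : ℂ), ?_⟩
  rw [← hc]
  conv_lhs => rw [hwQ]
  rw [smul_smul]

end Helpers

/-- if an order automorphism `φ` of `E(H)` preserves the probability with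
respect to states `D`, `D'`, then `φ(λP) = λφ(P)` for every rank-one projection `P` with
`tr(PD) ≠ 0` and every `λ ∈ [0,1]`. -/
theorem orderAuto_homogeneous_on_weak_atoms
    {H : Type} [NormedAddCommGroup H] [InnerProductSpace ℂ H] [CompleteSpace H]
    {ι : Type} (b : HilbertBasis ι ℂ H)
    (φ : (H →L[ℂ] H) → (H →L[ℂ] H))
    (hbij : Set.BijOn φ {E | IsEffect E} {E | IsEffect E})
    (horder : ∀ E F : H →L[ℂ] H, IsEffect E → IsEffect F → (E ≤ F ↔ φ E ≤ φ F))
    (D D' : H →L[ℂ] H) (hD : IsState b D) (hD' : IsState b D')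
    (htr : ∀ E : H →L[ℂ] H, IsEffect E → traceAlong b (φ E * D') = traceAlong b (E * D))
    (P : H →L[ℂ] H) (hP : IsRankOneProjection P)
    (hPD : traceAlong b (P * D) ≠ 0)
    (lam : ℝ) (hlam : lam ∈ Set.Icc (0:ℝ) 1) :
    φ ((lam : ℂ) • P) = (lam : ℂ) • φ P := by
  obtain ⟨hPidem, hPsa, hPrank⟩ := hP
  obtain ⟨hlam0, hlam1⟩ := hlam
  -- extract a unit vector u spanning the range of P
  obtain ⟨v₀, hv₀ne, hv₀span⟩ := finrank_eq_one_iff'.mp hPrank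
  have hv₀H : (v₀ : H) ≠ 0 := fun h => hv₀ne (Subtype.ext h)
  have hnv : ‖(v₀ : H)‖ ≠ 0 := norm_ne_zero_iff.mpr hv₀H
  set u : H := ((‖(v₀ : H)‖⁻¹ : ℝ) : ℂ) • (v₀ : H) with hudef
  have hu1 : ‖u‖ = 1 := by
    rw [hudef, norm_smul]
    simp [hnv]
  have hv₀u : (v₀ : H) = ((‖(v₀ : H)‖ : ℝ) : ℂ) • u := by
    rw [hudef, smul_smul]
    have h9 : ((‖(v₀ : H)‖ : ℝ) : ℂ) * ((‖(v₀ : H)‖⁻¹ : ℝ) : ℂ) = 1 := by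
      norm_cast
      exact mul_inv_cancel₀ hnv
    rw [h9, one_smul]
  have hsymP : ∀ x y : H, ⟪P x, y⟫_ℂ = ⟪x, P y⟫_ℂ := fun x y =>
    ((ContinuousLinearMap.isSelfAdjoint_iff_isSymmetric).mp hPsa) x y
  have hrangeP : ∀ x : H, ∃ c : ℂ, P x = c • u := by
    intro x
    have hx : P x ∈ LinearMap.range P.toLinearMap := ⟨x, rfl⟩
    obtain ⟨c, hc⟩ := hv₀span ⟨P x, hx⟩
    have hc' : c • (v₀ : H) = P x := congrArg Subtype.val hc
    refine ⟨c * ((‖(v₀ : H)‖ : ℝ) : ℂ), ?_⟩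
    rw [← hc']
    conv_lhs => rw [hv₀u]
    rw [smul_smul]
  have hPv₀ : P (v₀ : H) = (v₀ : H) := by
    obtain ⟨y, hy⟩ := v₀.2
    have h1 : P (P y) = P y := by
      have := congrArg (fun T : H →L[ℂ] H => T y) hPidem
      simpa [ContinuousLinearMap.mul_apply] using this
    have hy' : P y = (v₀ : H) := hy
    rw [← hy', h1]
  have hPu : P u = u := by
    rw [hudef, map_smul, hPv₀]
  have huu : ⟪u, u⟫_ℂ = 1 := by
    rw [inner_self_eq_norm_sq_to_K, hu1]
    norm_num
  have hPrk : P = rk u := by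
    have h := eq_smul_rk hu1 P hsymP hrangeP
    rw [hPu, huu, one_smul] at h
    exact h
  have hkerP : ∀ x, ⟪u, x⟫_ℂ = 0 → P x = 0 := by
    intro x hx
    rw [hPrk, rk_apply, hx, zero_smul]
  -- effects
  have hPpos : (0 : H →L[ℂ] H) ≤ P := by
    rw [ContinuousLinearMap.nonneg_iff_isPositive, hPrk]
    have := smul_rk_isPositive u 1 zero_le_one
    simpa using this
  have hP1 : P ≤ 1 := by
    show ((1 : H →L[ℂ] H) - P).IsPositive
    constructor
    · exact ((IsSelfAdjoint.one (R := H →L[ℂ] H)).sub hPsa).isSymmetric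
    · intro x
      rw [reApplyInnerSelf_apply, ContinuousLinearMap.sub_apply, inner_sub_left, map_sub,
        ContinuousLinearMap.one_apply]
      have h1 : re ⟪P x, x⟫_ℂ = 1 * ‖⟪u, x⟫_ℂ‖ ^ 2 := by
        rw [hPrk]
        have := re_inner_smul_rk u x 1
        simpa using this
      have h2 : ‖⟪u, x⟫_ℂ‖ ≤ ‖x‖ := by
        have := norm_inner_le_norm (𝕜 := ℂ) u x
        rwa [hu1, one_mul] at this
      have h3 : re ⟪x, x⟫_ℂ = ‖x‖ ^ 2 := by
        rw [inner_self_eq_norm_sq_to_K]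
        norm_cast
      rw [h1, h3]
      nlinarith [norm_nonneg ⟪u, x⟫_ℂ, norm_nonneg x]
  have hPeff : IsEffect P := ⟨hPpos, hP1⟩
  have hlamPpos : (0 : H →L[ℂ] H) ≤ (lam : ℂ) • P := by
    rw [ContinuousLinearMap.nonneg_iff_isPositive, hPrk]
    exact smul_rk_isPositive u lam hlam0
  have hlamP_le_P : (lam : ℂ) • P ≤ P := by
    show (P - (lam : ℂ) • P).IsPositive
    have hdiff : P - (lam : ℂ) • P = (((1 - lam : ℝ)) : ℂ) • rk u := by
      rw [hPrk]
      push_cast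
      module
    rw [hdiff]
    exact smul_rk_isPositive u (1 - lam) (by linarith)
  have hlamPeff : IsEffect ((lam : ℂ) • P) := ⟨hlamPpos, le_trans hlamP_le_P hP1⟩
  -- images
  have hQeff : IsEffect (φ P) := hbij.1 hPeff
  have hFeff : IsEffect (φ ((lam : ℂ) • P)) := hbij.1 hlamPeff
  have hFQ : φ ((lam : ℂ) • P) ≤ φ P := (horder _ _ hlamPeff hPeff).mp hlamP_le_P
  -- traces
  have htQ : traceAlong b (φ P * D') = traceAlong b (P * D) := htr P hPeff
  have htF : traceAlong b (φ ((lam : ℂ) • P) * D') = (lam : ℂ) * traceAlong b (P * D) := by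
    rw [htr _ hlamPeff, traceAlong_smul_mul, Complex.conj_ofReal]
  have hQne : φ P ≠ 0 := by
    intro h
    apply hPD
    rw [← htQ, h, zero_mul]
    simp [traceAlong]
  -- the chain condition below φ P
  have hchain : ∀ F₁ F₂ : H →L[ℂ] H, IsEffect F₁ → F₁ ≤ φ P → IsEffect F₂ → F₂ ≤ φ P →
      F₁ ≤ F₂ ∨ F₂ ≤ F₁ := by
    intro F₁ F₂ hF₁ hF₁le hF₂ hF₂le
    obtain ⟨E₁, hE₁s, hE₁⟩ := hbij.2.2 hF₁
    obtain ⟨E₂, hE₂s, hE₂⟩ := hbij.2.2 hF₂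
    have hE₁s' : IsEffect E₁ := hE₁s
    have hE₂s' : IsEffect E₂ := hE₂s
    have hE₁P : E₁ ≤ P := (horder E₁ P hE₁s' hPeff).mpr (by rw [hE₁]; exact hF₁le)
    have hE₂P : E₂ ≤ P := (horder E₂ P hE₂s' hPeff).mpr (by rw [hE₂]; exact hF₂le)
    have hs₁ : E₁ = ⟪u, E₁ u⟫_ℂ • rk u := below_structure hu1 hE₁s'.1 hE₁P hkerP
    have hs₂ : E₂ = ⟪u, E₂ u⟫_ℂ • rk u := below_structure hu1 hE₂s'.1 hE₂P hkerP
    have hreal : ∀ E : H →L[ℂ] H, (0 : H →L[ℂ] H) ≤ E →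
        (((re ⟪u, E u⟫_ℂ) : ℝ) : ℂ) = ⟪u, E u⟫_ℂ := by
      intro E hE
      have hEsym : ∀ x y : H, ⟪E x, y⟫_ℂ = ⟪x, E y⟫_ℂ := fun x y =>
        (((ContinuousLinearMap.nonneg_iff_isPositive E).mp hE).1) x y
      apply RCLike.conj_eq_iff_re.mp
      calc (starRingEnd ℂ) ⟪u, E u⟫_ℂ = ⟪E u, u⟫_ℂ := inner_conj_symm _ _
        _ = ⟪u, E u⟫_ℂ := hEsym u u
    have hr₁ := hreal E₁ hE₁s'.1
    have hr₂ := hreal E₂ hE₂s'.1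
    rcases le_total ((re ⟪u, E₁ u⟫_ℂ)) ((re ⟪u, E₂ u⟫_ℂ)) with hle | hle
    · left
      rw [← hE₁, ← hE₂]
      apply (horder E₁ E₂ hE₁s' hE₂s').mp
      show (E₂ - E₁).IsPositive
      have hdiff : E₂ - E₁ = ((((re ⟪u, E₂ u⟫_ℂ) - (re ⟪u, E₁ u⟫_ℂ) : ℝ)) : ℂ) • rk u := by
        conv_lhs => rw [hs₂, hs₁]
        rw [Complex.ofReal_sub, sub_smul, hr₁, hr₂]
      rw [hdiff]
      exact smul_rk_isPositive u _ (by linarith)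
    · right
      rw [← hE₁, ← hE₂]
      apply (horder E₂ E₁ hE₂s' hE₁s').mp
      show (E₁ - E₂).IsPositive
      have hdiff : E₁ - E₂ = ((((re ⟪u, E₁ u⟫_ℂ) - (re ⟪u, E₂ u⟫_ℂ) : ℝ)) : ℂ) • rk u := by
        conv_lhs => rw [hs₂, hs₁]
        rw [Complex.ofReal_sub, sub_smul, hr₁, hr₂]
      rw [hdiff]
      exact smul_rk_isPositive u _ (by linarith)
  -- φ P is a multiple of a rank-one projection
  obtain ⟨w, hw1, hQw⟩ := chain_rank_one (φ P)
    ((ContinuousLinearMap.nonneg_iff_isPositive (φ P)).mp hQeff.1) hQeff.2 hQne hchain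
  set ν : ℂ := ⟪w, φ P w⟫_ℂ with hν
  have hνne : ν ≠ 0 := by
    intro h
    apply hQne
    rw [hQw, h, zero_smul]
  have hkerQ : ∀ x, ⟪w, x⟫_ℂ = 0 → φ P x = 0 := by
    intro x hx
    conv_lhs => rw [hQw]
    rw [ContinuousLinearMap.smul_apply, rk_apply, hx, zero_smul, smul_zero]
  -- structure of φ (lam • P)
  have hFst : φ ((lam : ℂ) • P) = ⟪w, φ ((lam : ℂ) • P) w⟫_ℂ • rk w :=
    below_structure hw1 hFeff.1 hFQ hkerQ
  set κ : ℂ := ⟪w, φ ((lam : ℂ) • P) w⟫_ℂ * ν⁻¹ with hκ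
  have hFQ2 : φ ((lam : ℂ) • P) = κ • φ P := by
    rw [hκ]
    conv_rhs => rw [hQw]
    rw [smul_smul, mul_assoc, inv_mul_cancel₀ hνne, mul_one]
    exact hFst
  have htrF2 : traceAlong b (φ ((lam : ℂ) • P) * D')
      = (starRingEnd ℂ) κ * traceAlong b (φ P * D') := by
    conv_lhs => rw [hFQ2]
    exact traceAlong_smul_mul b κ (φ P) D'
  have hkey : (starRingEnd ℂ) κ * traceAlong b (P * D) = (lam : ℂ) * traceAlong b (P * D) := by
    rw [← htQ, ← htrF2, htF, htQ]
  have hκlam : κ = (lam : ℂ) := by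
    have h1 : (starRingEnd ℂ) κ = (lam : ℂ) := mul_right_cancel₀ hPD hkey
    calc κ = (starRingEnd ℂ) ((starRingEnd ℂ) κ) := (Complex.conj_conj κ).symm
      _ = (starRingEnd ℂ) ((lam : ℝ) : ℂ) := by rw [h1]
      _ = ((lam : ℝ) : ℂ) := Complex.conj_ofReal lam
  rw [hFQ2, hκlam]
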